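/- The linear program defining H_max^ε(X) is optimized by a vector λ* that equals 0 on a maximal set S of lowest-probability symbols with total mass at most ε, takes a value in (0,1) on the next symbol in the probability ordering, and equals 1 on all remaining symbols. -/
import Mathlib


open scoped BigOperators

/-- The linear program defining `H_max^ε` is optimized by a vector `lam*`
that vanishes on the maximal initial segment `S = {i | i < s}` of lowest-probability
symbols of mass at most `ε`, takes a value in `(0,1)` on the next symbol `s`, and
equals `1` on all remaining symbols. -/
theorem Hmax_LP_optimizer_structure
    {m : ℕ} (P : Fin m → ℝ) (hP0 : ∀ i, 0 ≤ P i) (hP1 : ∑ i, P i = 1)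
    (hmono : Monotone P)      -- symbols ordered by nondecreasing probability
    (ε : ℝ) (hε : 0 < ε)
    (s : Fin m)               -- the first symbol outside the discarded initial segment
    (hmass : ∑ i ∈ Finset.univ.filter (fun i => i < s), P i < ε)
    (hmaximal : ε < (∑ i ∈ Finset.univ.filter (fun i => i < s), P i) + P s) :
    ∃ lam : Fin m → ℝ,
      -- feasibility
      (∀ i, 0 ≤ lam i ∧ lam i ≤ 1) ∧ 1 - ε ≤ ∑ i, P i * lam i ∧
      -- optimality among all feasible vectors
      (∀ mu : Fin m → ℝ, (∀ i, 0 ≤ mu i ∧ mu i ≤ 1) → 1 - ε ≤ ∑ i, P i * mu i →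
        ∑ i, lam i ≤ ∑ i, mu i) ∧
      -- structure: 0 below `s`, in (0,1) at `s`, and 1 above `s`
      (∀ i, i < s → lam i = 0) ∧ (0 < lam s ∧ lam s < 1) ∧ (∀ i, s < i → lam i = 1) := by
  classical
  set M : ℝ := ∑ i ∈ Finset.univ.filter (fun i => i < s), P i with hM
  have hPs : 0 < P s := by linarith
  set t : ℝ := (M + P s - ε) / P s with ht
  have ht0 : 0 < t := div_pos (by linarith) hPs
  have ht1 : t < 1 := by
    rw [div_lt_one hPs]; linarith
  set lam : Fin m → ℝ := fun i => if i < s then 0 else if i = s then t else 1 with hlam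
  have hsplit : ∀ f : Fin m → ℝ, ∑ i, f i =
      (∑ i ∈ Finset.univ.filter (fun i => i < s), f i) + f s +
      ∑ i ∈ Finset.univ.filter (fun i => s < i), f i := by
    intro f
    have h1 : (Finset.univ.filter (fun i => ¬ i < s)) =
        insert s (Finset.univ.filter (fun i => s < i)) := by
      ext i
      simp only [Finset.mem_filter, Finset.mem_univ, true_and, Finset.mem_insert, not_lt]
      constructor
      · intro h
        rcases eq_or_lt_of_le h with h' | h'
        · exact Or.inl h'.symm
        · exact Or.inr h'
      · rintro (rfl | h)
        · exact le_refl _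
        · exact le_of_lt h
    have h2 : s ∉ Finset.univ.filter (fun i => s < i) := by simp
    calc ∑ i, f i
        = (∑ i ∈ Finset.univ.filter (fun i => i < s), f i) +
          ∑ i ∈ Finset.univ.filter (fun i => ¬ i < s), f i :=
          (Finset.sum_filter_add_sum_filter_not _ _ _).symm
      _ = _ := by rw [h1, Finset.sum_insert h2]; ring
  have hlam_lt : ∀ i, i < s → lam i = 0 := by
    intro i hi; simp [hlam, hi]
  have hlam_s : lam s = t := by simp [hlam]
  have hlam_gt : ∀ i, s < i → lam i = 1 := by
    intro i hi; simp [hlam, not_lt.mpr hi.le, hi.ne']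
  -- total tail mass
  have htail : ∑ i ∈ Finset.univ.filter (fun i => s < i), P i = 1 - M - P s := by
    have := hsplit P
    rw [hP1] at this
    linarith
  have hsum : ∑ i, P i * lam i = 1 - ε := by
    rw [hsplit (fun i => P i * lam i)]
    have e1 : ∑ i ∈ Finset.univ.filter (fun i => i < s), P i * lam i = 0 := by
      apply Finset.sum_eq_zero
      intro i hi
      simp only [Finset.mem_filter, Finset.mem_univ, true_and] at hi
      rw [hlam_lt i hi, mul_zero]
    have e2 : P s * lam s = M + P s - ε := by
      rw [hlam_s, ht]
      field_simp
    have e3 : ∑ i ∈ Finset.univ.filter (fun i => s < i), P i * lam i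
        = ∑ i ∈ Finset.univ.filter (fun i => s < i), P i := by
      apply Finset.sum_congr rfl
      intro i hi
      simp only [Finset.mem_filter, Finset.mem_univ, true_and] at hi
      rw [hlam_gt i hi, mul_one]
    rw [e1, e2, e3, htail]; ring
  refine ⟨lam, ?_, ?_, ?_, hlam_lt, ⟨by rw [hlam_s]; exact ht0, by rw [hlam_s]; exact ht1⟩,
    hlam_gt⟩
  · intro i
    rcases lt_trichotomy i s with h | h | h
    · rw [hlam_lt i h]; constructor <;> norm_num
    · rw [h, hlam_s]; exact ⟨ht0.le, ht1.le⟩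
    · rw [hlam_gt i h]; constructor <;> norm_num
  · rw [hsum]
  · intro mu hmu hfeas
    have h1 : ∀ i ∈ Finset.univ, P i * (mu i - lam i) ≤ P s * (mu i - lam i) := by
      intro i _
      rcases lt_trichotomy i s with h | h | h
      · rw [hlam_lt i h, sub_zero]
        exact mul_le_mul_of_nonneg_right (hmono h.le) (hmu i).1
      · rw [h]
      · rw [hlam_gt i h]
        exact mul_le_mul_of_nonpos_right (hmono h.le) (by linarith [(hmu i).2])
    have h2 : (0:ℝ) ≤ ∑ i, P i * (mu i - lam i) := by
      have : ∑ i, P i * (mu i - lam i) = (∑ i, P i * mu i) - ∑ i, P i * lam i := by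
        rw [← Finset.sum_sub_distrib]
        apply Finset.sum_congr rfl
        intro i _; ring
      rw [this, hsum]; linarith
    have h3 : (0:ℝ) ≤ P s * ∑ i, (mu i - lam i) := by
      rw [Finset.mul_sum]
      exact le_trans h2 (Finset.sum_le_sum h1)
    have h4 : (0:ℝ) ≤ ∑ i, (mu i - lam i) := nonneg_of_mul_nonneg_right h3 hPs
    have h5 : ∑ i, (mu i - lam i) = (∑ i, mu i) - ∑ i, lam i := by
      rw [← Finset.sum_sub_distrib]
    linarith [h5 ▸ h4]
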